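/- Suppose Λ_∘ is Hermitian with G*Λ_∘G > 0 on the unit circle and ∫ G (Ψ/(G*Λ_∘G)) G* = I (the normalized moment condition). Then tr(Λ_∘) = ∫ Ψ; in particular if ∫Ψ = 1 then tr(Λ_∘) = 1. -/

import Mathlib

open Matrix MeasureTheory Real Filter
open scoped ComplexOrder

noncomputable section

abbrev Mat (n : ℕ) := Matrix (Fin n) (Fin n) ℂ
abbrev Vec (n : ℕ) := Matrix (Fin n) (Fin 1) ℂ

/-- the point e^{jθ} on the unit circle -/
def circPt (θ : ℝ) : ℂ := Complex.exp (θ * Complex.I)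

/-- G(e^{jθ}) = (e^{jθ} I - A)⁻¹ B -/
def Gm {n : ℕ} (A : Mat n) (B : Vec n) (θ : ℝ) : Vec n :=
  (circPt θ • (1 : Mat n) - A)⁻¹ * B

/-- the scalar G* Λ G at e^{jθ} -/
def quad {n : ℕ} (A : Mat n) (B : Vec n) (Λ : Mat n) (θ : ℝ) : ℂ :=
  ((Gm A B θ)ᴴ * Λ * Gm A B θ) 0 0

/-- normalized entrywise matrix integral over the unit circle -/
def mInt {n : ℕ} (f : ℝ → Mat n) : Mat n :=
  Matrix.of fun i j => (1 / (2 * π) : ℝ) • ∫ θ in (0:ℝ)..(2 * π), f θ i j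

/-- normalized scalar (complex) integral over the unit circle -/
def sInt (f : ℝ → ℂ) : ℂ := (1 / (2 * π) : ℝ) • ∫ θ in (0:ℝ)..(2 * π), f θ

/-- normalized scalar (real) integral over the unit circle -/
def sIntR (f : ℝ → ℝ) : ℝ := (1 / (2 * π)) * ∫ θ in (0:ℝ)..(2 * π), f θ

/-- all eigenvalues of A lie in the open unit disc -/
def IsStable {n : ℕ} (A : Mat n) : Prop := ∀ μ ∈ spectrum ℂ A, ‖μ‖ < 1

/-- (A,B) is a reachable pair: the controllability matrix has full rank -/
def Reachable {n : ℕ} (A : Mat n) (B : Vec n) : Prop :=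
  (Matrix.of fun (i : Fin n) (k : Fin n) => (A ^ (k : ℕ) * B) i 0).rank = n

open scoped Classical in
/-- positive semidefinite square root (junk value 0 off the psd cone) -/
def msqrt {n : ℕ} (M : Mat n) : Mat n :=
  if h : M.PosSemidef then
    (h.1.eigenvectorUnitary : Mat n) * diagonal ((↑) ∘ Real.sqrt ∘ h.1.eigenvalues) *
      (star h.1.eigenvectorUnitary : Mat n) else 0

/-- the moment map ∫ G (Ψ/(G*ΛG)) G* -/
def moment {n : ℕ} (A : Mat n) (B : Vec n) (Ψ : ℝ → ℝ) (Λ : Mat n) : Mat n :=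
  mInt (fun θ => ((Ψ θ : ℂ) / quad A B Λ θ) • (Gm A B θ * (Gm A B θ)ᴴ))

/-- the iteration map Θ(Λ) = ∫ Λ^{1/2} G (Ψ/(G*ΛG)) G* Λ^{1/2} -/
def Theta {n : ℕ} (A : Mat n) (B : Vec n) (Ψ : ℝ → ℝ) (Λ : Mat n) : Mat n :=
  mInt (fun θ => ((Ψ θ : ℂ) / quad A B Λ θ) •
    (msqrt Λ * (Gm A B θ * (Gm A B θ)ᴴ) * msqrt Λ))

/-- the linearization M of Θ at Λ:
M(X) = X - Λ^{1/2} ∫ (GΨG*/(G*ΛG)) (G*XG/(G*ΛG)) Λ^{1/2} -/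
def Mlin {n : ℕ} (A : Mat n) (B : Vec n) (Ψ : ℝ → ℝ) (Λ : Mat n) (X : Mat n) : Mat n :=
  X - msqrt Λ * mInt (fun θ =>
    (((Ψ θ : ℂ) * (((Gm A B θ)ᴴ * X * Gm A B θ) 0 0)) / (quad A B Λ θ) ^ 2) •
      (Gm A B θ * (Gm A B θ)ᴴ)) * msqrt Λ

/-- the range of the operator Γ : Φ ↦ ∫ G Φ G* on continuous (2π-periodic) functions -/
def RangeGamma {n : ℕ} (A : Mat n) (B : Vec n) : Set (Mat n) :=
  {M | ∃ Φ : ℝ → ℝ, Continuous Φ ∧ (∀ θ, Φ (θ + 2 * π) = Φ θ) ∧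
    M = mInt (fun θ => (Φ θ : ℂ) • (Gm A B θ * (Gm A B θ)ᴴ))}

lemma continuous_circPt : Continuous circPt :=
  Complex.continuous_exp.comp (Complex.continuous_ofReal.mul continuous_const)

lemma det_circ_ne {n : ℕ} (A : Mat n) (hA : IsStable A) (θ : ℝ) :
    (circPt θ • (1 : Mat n) - A).det ≠ 0 := by
  intro h
  have hmem : circPt θ ∈ spectrum ℂ A := by
    rw [spectrum.mem_iff]
    intro hu
    rw [Algebra.algebraMap_eq_smul_one, Matrix.isUnit_iff_isUnit_det] at hu
    rw [h] at hu
    simp at hu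
  have h1 := hA _ hmem
  have h2 : ‖circPt θ‖ = 1 := by
    simpa [circPt] using Complex.abs_exp_ofReal_mul_I θ
  rw [h2] at h1
  exact lt_irrefl 1 h1

lemma continuous_Gm {n : ℕ} (A : Mat n) (B : Vec n) (hA : IsStable A) (i : Fin n) :
    Continuous fun θ => Gm A B θ i 0 := by
  have hM : Continuous fun θ => circPt θ • (1 : Mat n) - A :=
    (continuous_circPt.smul continuous_const).sub continuous_const
  have hdet : Continuous fun θ => (circPt θ • (1 : Mat n) - A).det := hM.matrix_det
  have hadj : Continuous fun θ => (circPt θ • (1 : Mat n) - A).adjugate := hM.matrix_adjugate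
  have hinv : ∀ j : Fin n, Continuous fun θ => (circPt θ • (1 : Mat n) - A)⁻¹ i j := by
    intro j
    have : (fun θ => (circPt θ • (1 : Mat n) - A)⁻¹ i j) =
        fun θ => ((circPt θ • (1 : Mat n) - A).det)⁻¹ *
          (circPt θ • (1 : Mat n) - A).adjugate i j := by
      funext θ
      rw [Matrix.inv_def, Matrix.smul_apply, Ring.inverse_eq_inv', smul_eq_mul]
    rw [this]
    exact (hdet.inv₀ (det_circ_ne A hA)).mul
      ((continuous_apply j).comp ((continuous_apply i).comp hadj))
  have : (fun θ => Gm A B θ i 0) =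
      fun θ => ∑ j, (circPt θ • (1 : Mat n) - A)⁻¹ i j * B j 0 := by
    funext θ; simp [Gm, Matrix.mul_apply]
  rw [this]
  exact continuous_finset_sum _ fun j _ => (hinv j).mul continuous_const

lemma continuous_quad {n : ℕ} (A : Mat n) (B : Vec n) (Λ : Mat n) (hA : IsStable A) :
    Continuous fun θ => quad A B Λ θ := by
  have : (fun θ => quad A B Λ θ) =
      fun θ => ∑ j, (∑ k, (starRingEnd ℂ) (Gm A B θ k 0) * Λ k j) * Gm A B θ j 0 := by
    funext θ
    simp [quad, Matrix.mul_apply, Matrix.conjTranspose_apply]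
  rw [this]
  exact continuous_finset_sum _ fun j _ =>
    (continuous_finset_sum _ fun k _ =>
      ((Complex.continuous_conj.comp (continuous_Gm A B hA k)).mul continuous_const)).mul
      (continuous_Gm A B hA j)

lemma trace_mul_mInt {n : ℕ} (Λ : Mat n) (f : ℝ → Mat n)
    (hf : ∀ i j, IntervalIntegrable (fun θ => f θ i j) volume 0 (2 * π)) :
    (Λ * mInt f).trace = sInt (fun θ => (Λ * f θ).trace) := by
  simp only [Matrix.trace, Matrix.diag, Matrix.mul_apply, mInt, Matrix.of_apply, sInt]
  have step1 : ∀ i k : Fin n, Λ i k * ((1 / (2 * π) : ℝ) • ∫ θ in (0:ℝ)..(2 * π), f θ k i) =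
      (1 / (2 * π) : ℝ) • ∫ θ in (0:ℝ)..(2 * π), Λ i k * f θ k i := by
    intro i k
    rw [mul_smul_comm, intervalIntegral.integral_const_mul]
  have step2 : ∀ i : Fin n, ∑ k, (∫ θ in (0:ℝ)..(2 * π), Λ i k * f θ k i) =
      ∫ θ in (0:ℝ)..(2 * π), ∑ k, Λ i k * f θ k i := fun i =>
    (intervalIntegral.integral_finset_sum (fun k _ => (hf k i).const_mul _)).symm
  simp only [step1, ← Finset.smul_sum, step2]
  congr 1
  have h2 : ∀ i : Fin n, IntervalIntegrable (fun θ => ∑ k, Λ i k * f θ k i) volume 0 (2 * π) := by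
    intro i
    have := IntervalIntegrable.sum (μ := volume) (a := (0:ℝ)) (b := 2 * π)
      (f := fun k θ => Λ i k * f θ k i) Finset.univ (fun k _ => (hf k i).const_mul _)
    simpa [Finset.sum_fn] using this
  exact (intervalIntegral.integral_finset_sum (fun i _ => h2 i)).symm

/-- if G*Λ∘G > 0 on the circle and ∫ G (Ψ/(G*Λ∘G)) G* = I, then
tr Λ∘ = ∫ Ψ; in particular tr Λ∘ = 1 when ∫ Ψ = 1. -/
theorem stmt6 {n : ℕ} (A : Mat n) (B : Vec n) (Ψ : ℝ → ℝ) (Λ : Mat n)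
    (hA : IsStable A) (hR : Reachable A B)
    (hΨc : Continuous Ψ) (hΨpos : ∀ θ, 0 < Ψ θ)
    (hΛ : Λ.IsHermitian)
    (hq : ∀ θ, 0 < (quad A B Λ θ).re)
    (hmom : moment A B Ψ Λ = 1) :
    Λ.trace = ((sIntR Ψ : ℝ) : ℂ) ∧ (sIntR Ψ = 1 → Λ.trace = 1) := by
  have hqne : ∀ θ, quad A B Λ θ ≠ 0 := by
    intro θ h
    have := hq θ
    rw [h] at this
    simp at this
  set f : ℝ → Mat n := fun θ => ((Ψ θ : ℂ) / quad A B Λ θ) • (Gm A B θ * (Gm A B θ)ᴴ)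
    with hf_def
  have hfint : ∀ i j, IntervalIntegrable (fun θ => f θ i j) volume 0 (2 * π) := by
    intro i j
    have hc : Continuous fun θ => f θ i j := by
      have : (fun θ => f θ i j) = fun θ => ((Ψ θ : ℂ) / quad A B Λ θ) *
          (Gm A B θ i 0 * (starRingEnd ℂ) (Gm A B θ j 0)) := by
        funext θ
        simp [hf_def, Matrix.mul_apply, Matrix.conjTranspose_apply, Fin.sum_univ_one]
      rw [this]
      exact ((Complex.continuous_ofReal.comp hΨc).div (continuous_quad A B Λ hA)
        hqne).mul ((continuous_Gm A B hA i).mul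
        (Complex.continuous_conj.comp (continuous_Gm A B hA j)))
    exact hc.intervalIntegrable _ _
  have hpt : ∀ θ, (Λ * f θ).trace = (Ψ θ : ℂ) := by
    intro θ
    have h1 : (Λ * f θ).trace = ((Ψ θ : ℂ) / quad A B Λ θ) *
        ((Gm A B θ)ᴴ * (Λ * Gm A B θ)).trace := by
      rw [hf_def]
      rw [Matrix.mul_smul, Matrix.trace_smul, smul_eq_mul, ← Matrix.mul_assoc,
        Matrix.trace_mul_comm]
    have h2 : ((Gm A B θ)ᴴ * (Λ * Gm A B θ)).trace = quad A B Λ θ := by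
      simp [Matrix.trace, quad, Matrix.mul_assoc, Fin.sum_univ_one]
    rw [h1, h2, div_mul_cancel₀ _ (hqne θ)]
  have hmain : Λ.trace = ((sIntR Ψ : ℝ) : ℂ) := by
    have h0 : Λ.trace = (Λ * moment A B Ψ Λ).trace := by rw [hmom, mul_one]
    rw [h0]
    have : moment A B Ψ Λ = mInt f := rfl
    rw [this, trace_mul_mInt Λ f hfint]
    simp only [sInt, hpt]
    rw [intervalIntegral.integral_ofReal, sIntR, Complex.real_smul, ← Complex.ofReal_mul]
  exact ⟨hmain, fun h => by rw [hmain, h, Complex.ofReal_one]⟩
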